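/- (Pseudovacuum eigenvalues) For every N ≥ 1 and every u ∈ ℂ, the pseudovacuum satisfies 𝒜^(N)(u) Ω^(N) = Δ₊^(N)(u) Ω^(N) and [sinh(2u+η) 𝒟^(N)(u) − sinh(η) 𝒜^(N)(u)] Ω^(N) = Δ₋^(N)(u) Ω^(N), with the explicit values Δ₊^(N)(u) = a(u)^{2N} sinh(u−η)/sinh(η) and Δ₋^(N)(u) = −b(u)^{2N} sinh(2u) sinh(u+2η)/sinh(η). -/

import Mathlib

noncomputable section
open Complex Matrix

/-- Spin configurations of a chain of `N` sites: `true` encodes `v₊`, `false` encodes `v₋`.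
The site with label `i ∈ {1,…,N}` corresponds to the index `i-1 : Fin N`
(so the leftmost site `N` is the index `N-1`). -/
abbrev Conf (N : ℕ) := Fin N → Bool

/-- The combinatorial-point parameter `η = 2πi/3`. -/
def ηc : ℂ := 2 * (Real.pi : ℂ) * Complex.I / 3

/-- `a(u) = sinh(u+η)/sinh η`. -/
def aF (u : ℂ) : ℂ := Complex.sinh (u + ηc) / Complex.sinh ηc
/-- `b(u) = sinh(u)/sinh η`. -/
def bF (u : ℂ) : ℂ := Complex.sinh u / Complex.sinh ηc
/-- `c(u) = 1`. -/
def cF (_ : ℂ) : ℂ := 1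
/-- `d(u) = sinh(u-η)/sinh η`. -/
def dF (u : ℂ) : ℂ := Complex.sinh (u - ηc) / Complex.sinh ηc
/-- The R-matrix `R(u)` on `V⊗V` in the ordered basis `(v₊⊗v₊, v₊⊗v₋, v₋⊗v₊, v₋⊗v₋)`:
`[[a,0,0,0],[0,b,c,0],[0,c,b,0],[0,0,0,a]]`. -/
def Rm (u : ℂ) : Matrix (Bool × Bool) (Bool × Bool) ℂ :=
  Matrix.of fun o i =>
    if o = i then (if o.1 = o.2 then aF u else bF u)
    else if o.1 = i.2 ∧ o.2 = i.1 ∧ o.1 ≠ o.2 then cF u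
    else 0

/-- The boundary K-matrix `K⁻(u) = diag(d(u), -a(u))` in the basis `(v₊, v₋)`. -/
def Km (u : ℂ) : Matrix Bool Bool ℂ :=
  Matrix.of fun o i => if o = i then (if o then dF u else -aF u) else 0

/-- `R₀ᵢ(u)`: the matrix `R(u)` applied to `V₀ ⊗ Vᵢ` (auxiliary space first), identity
elsewhere, on `V₀ ⊗ V^⊗N`; here the site with label `i` is the index `i-1`. -/
def R0i (N : ℕ) (u : ℂ) (i : Fin N) :
    Matrix (Bool × Conf N) (Bool × Conf N) ℂ :=
  Matrix.of fun x y =>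
    if ∀ j, j ≠ i → x.2 j = y.2 j then Rm u (x.1, x.2 i) (y.1, y.2 i) else 0

/-- `Rᵢ₀(u)`: the matrix `R(u)` applied to `Vᵢ ⊗ V₀` (auxiliary space second), identity
elsewhere, on `V₀ ⊗ V^⊗N`. -/
def Ri0 (N : ℕ) (u : ℂ) (i : Fin N) :
    Matrix (Bool × Conf N) (Bool × Conf N) ℂ :=
  Matrix.of fun x y =>
    if ∀ j, j ≠ i → x.2 j = y.2 j then Rm u (x.2 i, x.1) (y.2 i, y.1) else 0

/-- `T^(N)(u) = R₀₁(u) R₀₂(u) ⋯ R₀N(u)`. -/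
def Tmono (N : ℕ) (u : ℂ) : Matrix (Bool × Conf N) (Bool × Conf N) ℂ :=
  (List.ofFn fun i : Fin N => R0i N u i).prod

/-- `T̄^(N)(u) = R_{N0}(u) ⋯ R_{20}(u) R_{10}(u)`. -/
def Tbar (N : ℕ) (u : ℂ) : Matrix (Bool × Conf N) (Bool × Conf N) ℂ :=
  (List.ofFn fun i : Fin N => Ri0 N u i).reverse.prod

/-- `K₀⁻(u)`: the matrix `K⁻(u)` acting on the auxiliary space `V₀`, identity on `V^⊗N`. -/
def K0m (N : ℕ) (u : ℂ) : Matrix (Bool × Conf N) (Bool × Conf N) ℂ :=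
  Matrix.of fun x y => if x.2 = y.2 then Km u x.1 y.1 else 0

/-- The double-row monodromy matrix `U^(N)(u) = T̄^(N)(u) K₀⁻(u) T^(N)(u)`. -/
def Umono (N : ℕ) (u : ℂ) : Matrix (Bool × Conf N) (Bool × Conf N) ℂ :=
  Tbar N u * K0m N u * Tmono N u

/-- `𝒜^(N)(u)`: the `(v₊, v₊)` auxiliary-space block of `U^(N)(u)`. -/
def Aop (N : ℕ) (u : ℂ) : Matrix (Conf N) (Conf N) ℂ :=
  Matrix.of fun s t => Umono N u (true, s) (true, t)
/-- `ℬ^(N)(u)`: the `(v₊, v₋)` auxiliary-space block of `U^(N)(u)`. -/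
def Bop (N : ℕ) (u : ℂ) : Matrix (Conf N) (Conf N) ℂ :=
  Matrix.of fun s t => Umono N u (true, s) (false, t)
/-- `𝒞^(N)(u)`: the `(v₋, v₊)` auxiliary-space block of `U^(N)(u)`. -/
def Cop (N : ℕ) (u : ℂ) : Matrix (Conf N) (Conf N) ℂ :=
  Matrix.of fun s t => Umono N u (false, s) (true, t)
/-- `𝒟^(N)(u)`: the `(v₋, v₋)` auxiliary-space block of `U^(N)(u)`. -/
def Dop (N : ℕ) (u : ℂ) : Matrix (Conf N) (Conf N) ℂ :=
  Matrix.of fun s t => Umono N u (false, s) (false, t)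

/-- The transfer matrix
`t^(N)(u) = (sinh u / sinh η) 𝒜^(N)(u) - (sinh(u+2η)/sinh η) 𝒟^(N)(u)`. -/
def tOp (N : ℕ) (u : ℂ) : Matrix (Conf N) (Conf N) ℂ :=
  (Complex.sinh u / Complex.sinh ηc) • Aop N u
    - (Complex.sinh (u + 2 * ηc) / Complex.sinh ηc) • Dop N u

/-- The pseudovacuum `Ω^(N) = v₊ ⊗ ⋯ ⊗ v₊`. -/
def Omega (N : ℕ) : Conf N → ℂ := fun s => if ∀ j, s j = true then 1 else 0

/-- `E^ε ⊗ X : V^⊗(n+2) → V^⊗(n+1)`: the linear functional `E^ε : V → ℂ`, `v_ε ↦ 1`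
(zero on the other basis vector), applied to the leftmost site `N = n+2`, tensored with
the operator `X` on the remaining sites `n+1,…,1`.  Here `e = true` encodes `ε = +`. -/
def Etens (n : ℕ) (e : Bool) (X : Matrix (Conf (n + 1)) (Conf (n + 1)) ℂ) :
    Matrix (Conf (n + 1)) (Conf (n + 2)) ℂ :=
  Matrix.of fun o i =>
    (if i (Fin.last (n + 1)) = e then 1 else 0) * X o (fun j => i (Fin.castSucc j))

/-- `F ⊗ X` : the one-site operator `F` applied to the leftmost site `N+1` of a chain of
`N+1` sites, tensored with the operator `X` on the remaining sites `N,…,1`. -/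
def siteTens (N : ℕ) (F : Matrix Bool Bool ℂ) (X : Matrix (Conf N) (Conf N) ℂ) :
    Matrix (Conf (N + 1)) (Conf (N + 1)) ℂ :=
  Matrix.of fun o i =>
    F (o (Fin.last N)) (i (Fin.last N)) * X (fun j => o (Fin.castSucc j)) (fun j => i (Fin.castSucc j))

/-- `E^ε_{ε'} : V → V` sends `v_ε ↦ v_{ε'}` and the other basis vector to `0`
(`true` encodes `+`). -/
def Eop (e e' : Bool) : Matrix Bool Bool ℂ :=
  Matrix.of fun o i => if i = e ∧ o = e' then 1 else 0
/-! ### Auxiliary material for the pseudovacuum eigenvalue computation -/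

section Aux

open Finset

/-- The all-plus configuration. -/
def c1 (N : ℕ) : Conf N := fun _ => true

/-- The configuration with a single minus at site `k`. -/
def fl (N : ℕ) (k : Fin N) : Conf N := fun j => if j = k then false else true

lemma fl_self {N : ℕ} (k : Fin N) : fl N k k = false := by simp [fl]

lemma fl_ne {N : ℕ} {k j : Fin N} (h : j ≠ k) : fl N k j = true := by simp [fl, h]

lemma fl_inj {N : ℕ} {k k' : Fin N} (h : fl N k = fl N k') : k = k' := by
  by_contra hne
  have h1 := congrFun h k
  rw [fl_self, fl_ne hne] at h1
  exact Bool.noConfusion h1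

lemma Rm_swap (u : ℂ) (p q r s : Bool) : Rm u (p, q) (r, s) = Rm u (q, p) (s, r) := by
  cases p <;> cases q <;> cases r <;> cases s <;> simp [Rm]

lemma Rm_symm (u : ℂ) (p q r s : Bool) : Rm u (p, q) (r, s) = Rm u (r, s) (p, q) := by
  cases p <;> cases q <;> cases r <;> cases s <;> simp [Rm]

lemma Rm_col_tt (u : ℂ) (p q : Bool) :
    Rm u (p, q) (true, true) = if p ∧ q then aF u else 0 := by
  cases p <;> cases q <;> simp [Rm]

lemma Rm_col_ft (u : ℂ) (p q : Bool) :
    Rm u (p, q) (false, true) =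
      if ¬p ∧ q then bF u else if p ∧ ¬q then 1 else 0 := by
  cases p <;> cases q <;> simp [Rm, cF]

end Aux
section Aux2
open Finset

lemma conf_ext {N : ℕ} {s c : Conf N} {i : Fin N}
    (hoff : ∀ j, j ≠ i → s j = c j) (hi : s i = c i) : s = c := by
  funext j
  by_cases hj : j = i
  · subst hj; exact hi
  · exact hoff j hj

lemma c1_ne_fl {N : ℕ} (i : Fin N) : c1 N ≠ fl N i := by
  intro h
  have := congrFun h i
  rw [fl_self] at this
  exact Bool.noConfusion this

lemma fl_ne_c1 {N : ℕ} (i : Fin N) : fl N i ≠ c1 N := (c1_ne_fl i).symm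

lemma R0i_col_t {N : ℕ} (u : ℂ) (i : Fin N) (x : Bool × Conf N) :
    R0i N u i x (true, c1 N) = if x = (true, c1 N) then aF u else 0 := by
  obtain ⟨p, s⟩ := x
  simp only [R0i, Matrix.of_apply]
  by_cases hoff : ∀ j, j ≠ i → s j = c1 N j
  · rw [if_pos hoff]
    show Rm u (p, s i) (true, true) = _
    rw [Rm_col_tt]
    by_cases hsi : s i = true
    · by_cases hp : p = true
      · have hs : s = c1 N := conf_ext hoff hsi
        subst hs hp
        simp [c1]
      · have hne : ((p, s) : Bool × Conf N) ≠ (true, c1 N) := by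
          intro h
          exact hp (congrArg Prod.fst h)
        simp [hp, hne]
    · have hne : ((p, s) : Bool × Conf N) ≠ (true, c1 N) := by
        intro h
        have h2 : s = c1 N := congrArg Prod.snd h
        exact hsi (by rw [h2]; rfl)
      simp [hsi, hne]
  · rw [if_neg hoff, if_neg]
    intro h
    apply hoff
    have h2 : s = c1 N := congrArg Prod.snd h
    subst h2
    intro j _
    rfl

lemma R0i_col_f {N : ℕ} (u : ℂ) (i : Fin N) (x : Bool × Conf N) :
    R0i N u i x (false, c1 N) =
      (if x = (false, c1 N) then bF u else 0) +
        (if x = (true, fl N i) then 1 else 0) := by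
  obtain ⟨p, s⟩ := x
  simp only [R0i, Matrix.of_apply]
  by_cases hoff : ∀ j, j ≠ i → s j = c1 N j
  · rw [if_pos hoff]
    show Rm u (p, s i) (false, true) = _
    rw [Rm_col_ft]
    by_cases hsi : s i = true
    · have hs : s = c1 N := conf_ext hoff hsi
      subst hs
      by_cases hp : p = true
      · subst hp
        simp [c1_ne_fl i, Prod.ext_iff, c1]
      · have hp' : p = false := by simpa using hp
        subst hp'
        simp [c1_ne_fl i, Prod.ext_iff, c1]
    · have hsf : s i = false := by simpa using hsi
      have hs : s = fl N i := by
        refine conf_ext (fun j hj => ?_) (by rw [hsf, fl_self])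
        rw [hoff j hj, fl_ne hj]; rfl
      subst hs
      by_cases hp : p = true
      · subst hp
        simp [fl_ne_c1 i, Prod.ext_iff, fl_self]
      · have hp' : p = false := by simpa using hp
        subst hp'
        simp [fl_ne_c1 i, Prod.ext_iff, fl_self]
  · rw [if_neg hoff, if_neg, if_neg]
    · simp
    · intro h
      have h2 : s = fl N i := congrArg Prod.snd h
      subst h2
      exact hoff fun j hj => by rw [fl_ne hj]; rfl
    · intro h
      have h2 : s = c1 N := congrArg Prod.snd h
      subst h2
      exact hoff fun j _ => rfl

lemma R0i_col_fl {N : ℕ} (u : ℂ) {i k : Fin N} (hki : k ≠ i) (x : Bool × Conf N) :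
    R0i N u i x (true, fl N k) = if x = (true, fl N k) then aF u else 0 := by
  obtain ⟨p, s⟩ := x
  simp only [R0i, Matrix.of_apply]
  have hfi : fl N k i = true := fl_ne (fun h => hki h.symm)
  by_cases hoff : ∀ j, j ≠ i → s j = fl N k j
  · rw [if_pos hoff]
    show Rm u (p, s i) (true, fl N k i) = _
    rw [hfi, Rm_col_tt]
    by_cases hsi : s i = true
    · by_cases hp : p = true
      · have hs : s = fl N k := conf_ext hoff (by rw [hsi, hfi])
        subst hs hp
        simp [hfi]
      · have hne : ((p, s) : Bool × Conf N) ≠ (true, fl N k) := by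
          intro h
          exact hp (congrArg Prod.fst h)
        simp [hp, hne]
    · have hne : ((p, s) : Bool × Conf N) ≠ (true, fl N k) := by
        intro h
        have h2 : s = fl N k := congrArg Prod.snd h
        exact hsi (by rw [h2, hfi])
      simp [hsi, hne]
  · rw [if_neg hoff, if_neg]
    intro h
    have h2 : s = fl N k := congrArg Prod.snd h
    subst h2
    exact hoff fun j _ => rfl

end Aux2
section Aux3
open Finset

/-- Number of `+` spins (auxiliary plus sites). -/
def cnt {N : ℕ} (x : Bool × Conf N) : ℕ :=
  (if x.1 then 1 else 0) + ∑ j, (if x.2 j then 1 else 0)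

lemma cnt_split {N : ℕ} (x : Bool × Conf N) (i : Fin N) :
    cnt x = ((if x.1 then 1 else 0) + (if x.2 i then 1 else 0)) +
      ∑ j ∈ Finset.univ.erase i, (if x.2 j then 1 else 0) := by
  unfold cnt
  rw [← Finset.add_sum_erase _ _ (Finset.mem_univ i)]
  ring

lemma R0i_spin {N : ℕ} (u : ℂ) (i : Fin N) (x y : Bool × Conf N)
    (h : cnt x ≠ cnt y) : R0i N u i x y = 0 := by
  simp only [R0i, Matrix.of_apply]
  by_cases hoff : ∀ j, j ≠ i → x.2 j = y.2 j
  · rw [if_pos hoff]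
    have hsum : ∑ j ∈ Finset.univ.erase i, (if x.2 j then 1 else 0) =
        ∑ j ∈ Finset.univ.erase i, (if y.2 j then (1 : ℕ) else 0) := by
      refine Finset.sum_congr rfl fun j hj => ?_
      rw [hoff j (Finset.ne_of_mem_erase hj)]
    rw [cnt_split x i, cnt_split y i, hsum] at h
    have h2 : ¬((if x.1 then 1 else 0) + (if x.2 i then (1:ℕ) else 0) =
        (if y.1 then 1 else 0) + (if y.2 i then 1 else 0)) := by
      intro he
      exact h (by rw [he])
    rcases hx1 : x.1 <;> rcases hx2 : x.2 i <;> rcases hy1 : y.1 <;> rcases hy2 : y.2 i <;>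
      simp only [hx1, hx2, hy1, hy2, if_true, if_false] at h2 ⊢ <;>
      first
        | exact absurd trivial h2
        | exact absurd rfl h2
        | simp [Rm]
  · rw [if_neg hoff]

lemma prod_spin {N : ℕ} (u : ℂ) (l : List (Fin N)) :
    ∀ x y : Bool × Conf N, cnt x ≠ cnt y → (l.map (R0i N u)).prod x y = 0 := by
  induction l with
  | nil =>
    intro x y h
    have hxy : x ≠ y := fun he => h (he ▸ rfl)
    simp [Matrix.one_apply, hxy]
  | cons i l ih =>
    intro x y h
    simp only [List.map_cons, List.prod_cons, Matrix.mul_apply]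
    refine Finset.sum_eq_zero fun z _ => ?_
    by_cases hz : cnt x = cnt z
    · rw [ih z y (hz ▸ h), mul_zero]
    · rw [R0i_spin u i x z hz, zero_mul]

lemma prod_col_t {N : ℕ} (u : ℂ) (l : List (Fin N)) :
    ∀ x : Bool × Conf N, (l.map (R0i N u)).prod x (true, c1 N) =
      if x = (true, c1 N) then aF u ^ l.length else 0 := by
  induction l with
  | nil =>
    intro x
    simp [Matrix.one_apply]
  | cons i l ih =>
    intro x
    simp only [List.map_cons, List.prod_cons, Matrix.mul_apply]
    simp only [ih, mul_ite, mul_zero, Finset.sum_ite_eq', Finset.mem_univ, if_true]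
    rw [R0i_col_t]
    rw [ite_mul, zero_mul]
    simp only [List.length_cons]
    by_cases hx : x = ((true, c1 N) : Bool × Conf N) <;> simp [hx, pow_succ]
    ring
end Aux3
section Aux4
open Finset

lemma prod_col_f {N : ℕ} (u : ℂ) (l : List (Fin N)) (hl : l.Nodup) :
    ∀ x : Bool × Conf N, (l.map (R0i N u)).prod x (false, c1 N) =
      (if x = (false, c1 N) then bF u ^ l.length else 0) +
        ∑ p : Fin l.length,
          (if x = (true, fl N (l.get p)) then
            aF u ^ (p : ℕ) * bF u ^ (l.length - 1 - (p : ℕ)) else 0) := by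
  induction l with
  | nil =>
    intro x
    simp [Matrix.one_apply]
  | cons i l ih =>
    intro x
    obtain ⟨hi, hl'⟩ := List.nodup_cons.mp hl
    simp only [List.map_cons, List.prod_cons, Matrix.mul_apply]
    simp only [ih hl']
    simp only [mul_add, Finset.sum_add_distrib, Finset.mul_sum]
    rw [Finset.sum_comm]
    simp only [mul_ite, mul_zero, Finset.sum_ite_eq', Finset.mem_univ, if_true]
    rw [R0i_col_f]
    have hgl : ∀ p : Fin l.length, R0i N u i x (true, fl N (l.get p)) =
        if x = (true, fl N (l.get p)) then aF u else 0 := by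
      intro p
      refine R0i_col_fl u (fun h => hi ?_) x
      rw [← h]
      exact List.get_mem l p
    simp only [hgl, List.length_cons]
    rw [Fin.sum_univ_succ]
    simp only [List.get_eq_getElem, List.getElem_cons_succ, List.getElem_cons_zero,
      Fin.val_zero, Fin.val_succ, pow_zero, Nat.add_sub_cancel, Nat.sub_zero, one_mul]
    by_cases hx1 : x = ((false, c1 N) : Bool × Conf N)
    · subst hx1
      have hne : ((false, c1 N) : Bool × Conf N) ≠ (true, fl N i) := by
        simp [Prod.ext_iff]
      have hne2 : ∀ p : Fin l.length,
          ((false, c1 N) : Bool × Conf N) ≠ (true, fl N (l.get p)) := by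
        intro p; simp [Prod.ext_iff]
      simp [hne, hne2]
      ring
    · by_cases hx2 : x = ((true, fl N i) : Bool × Conf N)
      · subst hx2
        have hne2 : ∀ p : Fin l.length,
            ((true, fl N i) : Bool × Conf N) ≠ (true, fl N (l.get p)) := by
          intro p h
          have h2 : fl N i = fl N (l.get p) := congrArg Prod.snd h
          refine hi ?_
          rw [fl_inj h2]
          exact List.get_mem l p
        have hne3 : ∀ p : Fin l.length, fl N i ≠ fl N l[(p : ℕ)] := by
          intro p h
          refine hi ?_
          rw [fl_inj h]
          exact List.getElem_mem p.2
        simp [hx1, hne3]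
      · rw [if_neg hx1, if_neg hx1, if_neg hx2, if_neg hx2]
        simp only [add_zero, zero_add, zero_mul]
        refine Finset.sum_congr rfl fun p _ => ?_
        by_cases hxp : x = ((true, fl N l[(p : ℕ)]) : Bool × Conf N)
        · rw [if_pos hxp, if_pos hxp]
          rw [show l.length - ((p : ℕ) + 1) = l.length - 1 - (p : ℕ) by omega]
          ring
        · rw [if_neg hxp, if_neg hxp, zero_mul]
end Aux4
section Aux5
open Finset

lemma R0i_symm {N : ℕ} (u : ℂ) (i : Fin N) : (R0i N u i)ᵀ = R0i N u i := by
  ext x y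
  simp only [Matrix.transpose_apply, R0i, Matrix.of_apply]
  by_cases h : ∀ j, j ≠ i → x.2 j = y.2 j
  · have h' : ∀ j, j ≠ i → y.2 j = x.2 j := fun j hj => (h j hj).symm
    rw [if_pos h, if_pos h']
    exact Rm_symm u _ _ _ _
  · have h' : ¬∀ j, j ≠ i → y.2 j = x.2 j := fun hc => h fun j hj => (hc j hj).symm
    rw [if_neg h, if_neg h']

lemma Ri0_eq_R0i {N : ℕ} (u : ℂ) (i : Fin N) : Ri0 N u i = R0i N u i := by
  ext x y
  simp only [Ri0, R0i, Matrix.of_apply]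
  by_cases h : ∀ j, j ≠ i → x.2 j = y.2 j
  · rw [if_pos h, if_pos h, Rm_swap]
  · rw [if_neg h, if_neg h]

lemma Tbar_eq {N : ℕ} (u : ℂ) : Tbar N u = (Tmono N u)ᵀ := by
  rw [Tbar, Tmono, Matrix.transpose_list_prod, List.map_ofFn]
  have : (transpose ∘ fun i => R0i N u i) = fun i : Fin N => Ri0 N u i := by
    funext i
    show (R0i N u i)ᵀ = Ri0 N u i
    rw [R0i_symm, Ri0_eq_R0i]
  rw [this]

lemma K0m_apply {N : ℕ} (u : ℂ) (x y : Bool × Conf N) :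
    K0m N u x y = if x = y then (if x.1 then dF u else -aF u) else 0 := by
  simp only [K0m, Km, Matrix.of_apply]
  by_cases h2 : x.2 = y.2
  · by_cases h1 : x.1 = y.1
    · have : x = y := Prod.ext h1 h2
      simp [h2, h1, this]
    · have : x ≠ y := fun h => h1 (congrArg Prod.fst h)
      simp [h2, h1, this]
  · have : x ≠ y := fun h => h2 (congrArg Prod.snd h)
    simp [h2, this]

lemma Umono_apply {N : ℕ} (u : ℂ) (e e' : Bool) (s t : Conf N) :
    Umono N u (e, s) (e', t) =
      ∑ x : Bool × Conf N,
        Tmono N u x (e, s) * (if x.1 then dF u else -aF u) * Tmono N u x (e', t) := by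
  rw [Umono, Tbar_eq, Matrix.mul_assoc]
  rw [Matrix.mul_apply]
  refine Finset.sum_congr rfl fun x _ => ?_
  rw [Matrix.transpose_apply, Matrix.mul_apply]
  simp only [K0m_apply, ite_mul, zero_mul, Finset.sum_ite_eq, Finset.mem_univ, if_true]
  by_cases hx : x.1 = true <;> simp [hx] <;> ring

/-- `Tmono` as a product over a list. -/
lemma Tmono_eq {N : ℕ} (u : ℂ) :
    Tmono N u = ((List.finRange N).map (R0i N u)).prod := by
  rw [Tmono, List.ofFn_eq_map]

lemma Tmono_spin {N : ℕ} (u : ℂ) (x y : Bool × Conf N) (h : cnt x ≠ cnt y) :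
    Tmono N u x y = 0 := by
  rw [Tmono_eq]
  exact prod_spin u _ x y h

lemma Tmono_col_t {N : ℕ} (u : ℂ) (x : Bool × Conf N) :
    Tmono N u x (true, c1 N) = if x = (true, c1 N) then aF u ^ N else 0 := by
  rw [Tmono_eq]
  rw [prod_col_t u (List.finRange N) x, List.length_finRange]

lemma Tmono_col_f {N : ℕ} (u : ℂ) (x : Bool × Conf N) :
    Tmono N u x (false, c1 N) =
      (if x = (false, c1 N) then bF u ^ N else 0) +
        ∑ p : Fin N,
          (if x = (true, fl N p) then
            aF u ^ (p : ℕ) * bF u ^ (N - 1 - (p : ℕ)) else 0) := by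
  rw [Tmono_eq, prod_col_f u (List.finRange N) (List.nodup_finRange N) x]
  congr 1
  · rw [List.length_finRange]
  · rw [← Fin.sum_congr' _ (List.length_finRange : (List.finRange N).length = N)]
    refine Finset.sum_congr rfl fun p _ => ?_
    have hg : (List.finRange N).get p = ⟨(p : ℕ), by
        simpa [List.length_finRange] using p.2⟩ := List.get_finRange p
    rw [hg]
    simp only [List.length_finRange]
    rfl
end Aux5
section Aux6
open Finset

lemma sinh_eta_ne : Complex.sinh ηc ≠ 0 := by
  have h : ηc = ((2 * Real.pi / 3 : ℝ) : ℂ) * Complex.I := by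
    rw [ηc]
    push_cast
    ring
  rw [h, Complex.sinh_mul_I]
  simp only [← Complex.ofReal_sin, ne_eq, mul_eq_zero, Complex.I_ne_zero, or_false]
  rw [Complex.ofReal_eq_zero]
  have hpos : 0 < Real.sin (2 * Real.pi / 3) := by
    apply Real.sin_pos_of_pos_of_lt_pi
    · positivity
    · nlinarith [Real.pi_pos]
  exact ne_of_gt hpos

lemma sinh_sq_sub (v w : ℂ) :
    Complex.sinh (v + w) ^ 2 - Complex.sinh v ^ 2 =
      Complex.sinh (2 * v + w) * Complex.sinh w := by
  simp only [two_mul, Complex.sinh_add, Complex.cosh_add]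
  linear_combination (Complex.sinh v ^ 2) * Complex.cosh_sq_sub_sinh_sq w

lemma sinh_key (v w : ℂ) :
    Complex.sinh (2 * v + w) * Complex.sinh (v + w) +
      Complex.sinh (v - w) * Complex.sinh w =
        Complex.sinh (2 * v) * Complex.sinh (v + 2 * w) := by
  simp only [two_mul, Complex.sinh_add, Complex.cosh_add, Complex.sinh_sub]
  linear_combination (Complex.cosh v * Complex.sinh w ^ 2 -
    Complex.sinh v * Complex.sinh w * Complex.cosh w) * Complex.cosh_sq_sub_sinh_sq v

lemma sum_lt_of_ne {N : ℕ} {s : Conf N} (hs : s ≠ c1 N) :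
    ∑ j, (if s j then (1 : ℕ) else 0) < N := by
  have hj : ∃ j, s j ≠ true := by
    by_contra hc
    push_neg at hc
    exact hs (funext fun j => hc j)
  obtain ⟨j, hj⟩ := hj
  calc ∑ j, (if s j then (1 : ℕ) else 0) < ∑ _j : Fin N, 1 := by
        refine Finset.sum_lt_sum (fun i _ => by split <;> omega) ⟨j, Finset.mem_univ j, ?_⟩
        simp [hj]
      _ = N := by simp

lemma cnt_pair_c1 {N : ℕ} (e : Bool) :
    cnt ((e, c1 N) : Bool × Conf N) = (if e then 1 else 0) + N := by
  unfold cnt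
  congr 1
  simp [c1]

lemma cnt_pair_fl {N : ℕ} (k : Fin N) :
    cnt ((true, fl N k) : Bool × Conf N) = N := by
  unfold cnt
  have h : ∑ j, (if fl N k j then (1 : ℕ) else 0) = N - 1 := by
    rw [← Finset.add_sum_erase _ _ (Finset.mem_univ k), fl_self, if_neg (by simp)]
    rw [Finset.sum_congr rfl (fun j hj => if_pos (fl_ne (Finset.ne_of_mem_erase hj)))]
    simp [Finset.card_erase_of_mem]
  rw [h]
  have : 1 ≤ N := k.pos
  simp
  omega

lemma mulVec_Omega {N : ℕ} (M : Matrix (Conf N) (Conf N) ℂ) (s : Conf N) :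
    M.mulVec (Omega N) s = M s (c1 N) := by
  unfold Matrix.mulVec dotProduct Omega
  have h : ∀ t : Conf N, (if ∀ j, t j = true then (1:ℂ) else 0) = if t = c1 N then 1 else 0 := by
    intro t
    by_cases ht : t = c1 N
    · subst ht; simp [c1]
    · rw [if_neg ht, if_neg]
      intro hall
      exact ht (funext fun j => hall j)
  simp only [h, mul_ite, mul_one, mul_zero, Finset.sum_ite_eq', Finset.mem_univ, if_true]

lemma Aop_omega {N : ℕ} (u : ℂ) (s : Conf N) :
    (Aop N u).mulVec (Omega N) s =
      if s = c1 N then aF u ^ N * dF u * aF u ^ N else 0 := by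
  rw [mulVec_Omega]
  show Umono N u (true, s) (true, c1 N) = _
  rw [Umono_apply]
  simp only [Tmono_col_t, mul_ite, mul_zero, Finset.sum_ite_eq', Finset.mem_univ, if_true]
  by_cases hs : s = c1 N
  · subst hs
    rw [Tmono_col_t, if_pos rfl, if_pos rfl]
  · have hlt := sum_lt_of_ne hs
    have hc : cnt ((true, c1 N) : Bool × Conf N) ≠ cnt ((true, s) : Bool × Conf N) := by
      rw [cnt_pair_c1]
      simp only [cnt, if_pos rfl]
      omega
    rw [Tmono_spin u _ _ hc, zero_mul, zero_mul, if_neg hs]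

end Aux6
section Aux7
open Finset

lemma Dop_omega {N : ℕ} (u : ℂ) (s : Conf N) :
    (Dop N u).mulVec (Omega N) s =
      if s = c1 N then
        bF u ^ N * (-aF u) * bF u ^ N +
          ∑ p : Fin N, (aF u ^ (p : ℕ) * bF u ^ (N - 1 - (p : ℕ))) * dF u *
            (aF u ^ (p : ℕ) * bF u ^ (N - 1 - (p : ℕ)))
      else 0 := by
  rw [mulVec_Omega]
  show Umono N u (false, s) (false, c1 N) = _
  rw [Umono_apply]
  simp only [Tmono_col_f, mul_add, Finset.mul_sum]
  rw [Finset.sum_add_distrib, Finset.sum_comm]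
  simp only [mul_ite, mul_zero, Finset.sum_ite_eq', Finset.mem_univ, if_true]
  by_cases hs : s = c1 N
  · subst hs
    have hT1 : Tmono N u (false, c1 N) (false, c1 N) = bF u ^ N := by
      rw [Tmono_col_f, if_pos rfl]
      have h : ∀ p : Fin N, ((false, c1 N) : Bool × Conf N) ≠ (true, fl N p) := by
        intro p h
        exact Bool.noConfusion (congrArg Prod.fst h)
      simp [h]
    have hT2 : ∀ p : Fin N, Tmono N u (true, fl N p) (false, c1 N) =
        aF u ^ (p : ℕ) * bF u ^ (N - 1 - (p : ℕ)) := by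
      intro p
      rw [Tmono_col_f]
      have h1 : ((true, fl N p) : Bool × Conf N) ≠ (false, c1 N) := by
        intro h
        exact Bool.noConfusion (congrArg Prod.fst h)
      have h2 : ∀ q : Fin N,
          (((true, fl N p) : Bool × Conf N) = (true, fl N q)) ↔ q = p := by
        intro q
        constructor
        · intro h
          exact (fl_inj (congrArg Prod.snd h)).symm
        · rintro rfl
          rfl
      rw [if_neg h1, zero_add]
      simp only [h2]
      rw [Finset.sum_ite_eq' Finset.univ p
        (fun q => aF u ^ (q : ℕ) * bF u ^ (N - 1 - (q : ℕ))), if_pos (Finset.mem_univ p)]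
    rw [if_pos rfl, hT1]
    simp only [hT2, Bool.false_eq_true, if_false]
    try ring_nf
    try ring
  · rw [if_neg hs]
    have hlt := sum_lt_of_ne hs
    have hz1 : Tmono N u (false, c1 N) (false, s) = 0 := by
      refine Tmono_spin u _ _ ?_
      rw [cnt_pair_c1]
      simp only [cnt, if_neg (by exact Bool.false_ne_true)]
      omega
    have hz2 : ∀ p : Fin N, Tmono N u (true, fl N p) (false, s) = 0 := by
      intro p
      refine Tmono_spin u _ _ ?_
      rw [cnt_pair_fl]
      simp only [cnt, if_neg (by exact Bool.false_ne_true)]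
      omega
    simp [hz1, hz2]
end Aux7
/-- pseudovacuum eigenvalues: for every `N = n+1 ≥ 1` and every `u ∈ ℂ`,
`𝒜^(N)(u) Ω^(N) = Δ₊^(N)(u) Ω^(N)` and
`[sinh(2u+η) 𝒟^(N)(u) - sinh(η) 𝒜^(N)(u)] Ω^(N) = Δ₋^(N)(u) Ω^(N)`, with
`Δ₊^(N)(u) = a(u)^{2N} sinh(u-η)/sinh η` and
`Δ₋^(N)(u) = -b(u)^{2N} sinh(2u) sinh(u+2η)/sinh η`. -/
theorem pseudovacuum_eigenvalues (n : ℕ) (u : ℂ) :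
    (Aop (n + 1) u).mulVec (Omega (n + 1))
        = (aF u ^ (2 * (n + 1)) * Complex.sinh (u - ηc) / Complex.sinh ηc) •
            Omega (n + 1)
    ∧ (Complex.sinh (2 * u + ηc) • Dop (n + 1) u
          - Complex.sinh ηc • Aop (n + 1) u).mulVec (Omega (n + 1))
        = (-(bF u ^ (2 * (n + 1))) * Complex.sinh (2 * u) * Complex.sinh (u + 2 * ηc)
            / Complex.sinh ηc) • Omega (n + 1) := by
  have hη : Complex.sinh ηc ≠ 0 := sinh_eta_ne
  set N := n + 1 with hN
  have hOm1 : ∀ s : Conf N, s = c1 N → Omega N s = 1 := by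
    intro s hs
    subst hs
    unfold Omega
    simp [c1]
  have hOm0 : ∀ s : Conf N, s ≠ c1 N → Omega N s = 0 := by
    intro s hs
    unfold Omega
    rw [if_neg (fun hall => hs (funext fun j => hall j))]
  constructor
  · funext s
    rw [Aop_omega, Pi.smul_apply, smul_eq_mul]
    by_cases hs : s = c1 N
    · rw [if_pos hs, hOm1 s hs, mul_one]
      show aF u ^ N * (Complex.sinh (u - ηc) / Complex.sinh ηc) * aF u ^ N = _
      rw [mul_div_assoc]
      ring
    · rw [if_neg hs, hOm0 s hs, mul_zero]
  · funext s
    rw [Matrix.sub_mulVec, Matrix.smul_mulVec, Matrix.smul_mulVec]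
    simp only [Pi.sub_apply, Pi.smul_apply, smul_eq_mul]
    rw [Aop_omega, Dop_omega]
    by_cases hs : s = c1 N
    · rw [if_pos hs, if_pos hs, hOm1 s hs, mul_one]
      -- pass to the scalar identity
      have ha : Complex.sinh (u + ηc) = aF u * Complex.sinh ηc := by
        rw [aF, div_mul_cancel₀ _ hη]
      have hd : Complex.sinh (u - ηc) = dF u * Complex.sinh ηc := by
        rw [dF, div_mul_cancel₀ _ hη]
      have hb : Complex.sinh u = bF u * Complex.sinh ηc := by
        rw [bF, div_mul_cancel₀ _ hη]
      have hab : aF u ^ 2 - bF u ^ 2 = Complex.sinh (2 * u + ηc) / Complex.sinh ηc := by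
        rw [aF, bF, div_pow, div_pow, div_sub_div_same, sinh_sq_sub u ηc, sq,
          mul_div_mul_right _ _ hη]
      have hgeom := geom_sum₂_mul (aF u ^ 2) (bF u ^ 2) N
      have h2 : Complex.sinh (2 * u + ηc) *
          (∑ p ∈ Finset.range N, (aF u ^ 2) ^ p * (bF u ^ 2) ^ (N - 1 - p)) =
          Complex.sinh ηc * ((aF u ^ 2) ^ N - (bF u ^ 2) ^ N) := by
        have he : Complex.sinh (2 * u + ηc) = (aF u ^ 2 - bF u ^ 2) * Complex.sinh ηc := by
          rw [hab, div_mul_cancel₀ _ hη]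
        rw [he, ← hgeom]
        ring
      have hsum : ∑ p : Fin N, (aF u ^ (p : ℕ) * bF u ^ (N - 1 - (p : ℕ))) * dF u *
            (aF u ^ (p : ℕ) * bF u ^ (N - 1 - (p : ℕ))) =
          dF u * ∑ p ∈ Finset.range N, (aF u ^ 2) ^ p * (bF u ^ 2) ^ (N - 1 - p) := by
        rw [Finset.mul_sum, ← Fin.sum_univ_eq_sum_range]
        refine Finset.sum_congr rfl fun p _ => ?_
        ring
      rw [hsum]
      rw [eq_div_iff hη]
      have hkey := sinh_key u ηc
      rw [ha, hd] at hkey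
      linear_combination (-(bF u ^ (2 * N))) * hkey + (dF u * Complex.sinh ηc) * h2
    · rw [if_neg hs, if_neg hs, hOm0 s hs, mul_zero, mul_zero, mul_zero, sub_zero]
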